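/- On a trivial quantum principal bundle P(B,A,Φ), the map ω_triv(a) = Σ Φ⁻¹(a₍₁₎) d Φ(a₍₂₎) satisfies ω_triv(1) = 0, the verticality condition ~(ω_triv(a)) = 1⊗a − ε(a)⊗1, and Ad_R-covariance Δ_R ω_triv(a) = Σ ω_triv(a₍₂₎) ⊗ (Sa₍₁₎)a₍₃₎; hence it is a connection one-form. -/

import Mathlib

/- STATEMENT 15: On a trivial quantum principal bundle P(B,A,Φ), the map
ω_triv(a) = Σ Φ⁻¹(a₍₁₎) d Φ(a₍₂₎) (universal calculus) satisfies ω_triv(1)=0,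
~(ω_triv(a)) = 1⊗a − ε(a)⊗1, and Δ_R ω_triv(a) = Σ ω_triv(a₍₂₎)⊗(Sa₍₁₎)a₍₃₎;
hence it is a connection one-form. -/

open TensorProduct

section Conv
variable {k A M : Type*} [CommSemiring k] [AddCommMonoid A] [Module k A] [Coalgebra k A]
  [Semiring M] [Algebra k M]

noncomputable def myconv (f g : A →ₗ[k] M) : A →ₗ[k] M :=
  LinearMap.mul' k M ∘ₗ TensorProduct.map f g ∘ₗ Coalgebra.comul

lemma myconv_eq {f g : A →ₗ[k] M} {h : A ⊗[k] A →ₗ[k] M}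
    (H : LinearMap.mul' k M ∘ₗ TensorProduct.map f g = h) :
    myconv f g = h ∘ₗ Coalgebra.comul := by
  rw [myconv, ← LinearMap.comp_assoc, H]

lemma myconv_assoc (f g h : A →ₗ[k] M) :
    myconv (myconv f g) h = myconv f (myconv g h) := by
  have h1 : TensorProduct.map (LinearMap.mul' k M ∘ₗ TensorProduct.map f g ∘ₗ Coalgebra.comul) h
      = TensorProduct.map (LinearMap.mul' k M ∘ₗ TensorProduct.map f g) h ∘ₗ
        (Coalgebra.comul (R := k) (A := A)).rTensor A := by
    rw [LinearMap.rTensor, ← TensorProduct.map_comp, LinearMap.comp_id, LinearMap.comp_assoc]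
  have h2 : TensorProduct.map f (LinearMap.mul' k M ∘ₗ TensorProduct.map g h ∘ₗ Coalgebra.comul)
      = TensorProduct.map f (LinearMap.mul' k M ∘ₗ TensorProduct.map g h) ∘ₗ
        (Coalgebra.comul (R := k) (A := A)).lTensor A := by
    rw [LinearMap.lTensor, ← TensorProduct.map_comp, LinearMap.comp_id, LinearMap.comp_assoc]
  have key : (LinearMap.mul' k M ∘ₗ TensorProduct.map (LinearMap.mul' k M ∘ₗ TensorProduct.map f g) h)
      ∘ₗ (TensorProduct.assoc k A A A).symm.toLinearMap
      = LinearMap.mul' k M ∘ₗ TensorProduct.map f (LinearMap.mul' k M ∘ₗ TensorProduct.map g h) := by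
    ext x y z
    simp [mul_assoc]
  have co : ((Coalgebra.comul (R := k) (A := A)).rTensor A) ∘ₗ Coalgebra.comul
      = (TensorProduct.assoc k A A A).symm.toLinearMap ∘ₗ
        ((Coalgebra.comul (R := k) (A := A)).lTensor A) ∘ₗ Coalgebra.comul := by
    rw [Coalgebra.coassoc_symm]
  unfold myconv
  rw [h1, h2]
  simp only [LinearMap.comp_assoc]
  rw [co]
  simp only [← LinearMap.comp_assoc]
  rw [key]

lemma myconv_one_left (f : A →ₗ[k] M) :
    myconv ((Algebra.linearMap k M) ∘ₗ Coalgebra.counit) f = f := by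
  have h1 : TensorProduct.map ((Algebra.linearMap k M) ∘ₗ Coalgebra.counit) f
      = TensorProduct.map (Algebra.linearMap k M) f ∘ₗ
        (Coalgebra.counit (R := k) (A := A)).rTensor A := by
    rw [LinearMap.rTensor, ← TensorProduct.map_comp, LinearMap.comp_id]
  unfold myconv
  rw [h1, LinearMap.comp_assoc, Coalgebra.rTensor_counit_comp_comul]
  ext a
  simp

lemma myconv_one_right (f : A →ₗ[k] M) :
    myconv f ((Algebra.linearMap k M) ∘ₗ Coalgebra.counit) = f := by
  have h1 : TensorProduct.map f ((Algebra.linearMap k M) ∘ₗ Coalgebra.counit)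
      = TensorProduct.map f (Algebra.linearMap k M) ∘ₗ
        (Coalgebra.counit (R := k) (A := A)).lTensor A := by
    rw [LinearMap.lTensor, ← TensorProduct.map_comp, LinearMap.comp_id]
  unfold myconv
  rw [h1, LinearMap.comp_assoc, Coalgebra.lTensor_counit_comp_comul]
  ext a
  simp

end Conv

noncomputable def AdR (k A : Type*) [Field k] [Ring A] [HopfAlgebra k A] :
    A →ₗ[k] A ⊗[k] A :=
  (LinearMap.lTensor A (LinearMap.mul' k A)) ∘ₗ
    (TensorProduct.assoc k A A A).toLinearMap ∘ₗ
    (LinearMap.rTensor A (TensorProduct.comm k A A).toLinearMap) ∘ₗ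
    (TensorProduct.assoc k A A A).symm.toLinearMap ∘ₗ
    (LinearMap.rTensor (A ⊗[k] A) (HopfAlgebra.antipode (R := k) (A := A))) ∘ₗ
    (LinearMap.lTensor A (Coalgebra.comul (R := k) (A := A))) ∘ₗ
    (Coalgebra.comul (R := k) (A := A))

/-- The universal differential d u = 1⊗u − u⊗1 on P, valued in P⊗P. -/
noncomputable def dUniv (k P : Type*) [Field k] [Ring P] [Algebra k P] :
    P →ₗ[k] P ⊗[k] P :=
  TensorProduct.mk k P P 1 - (TensorProduct.mk k P P).flip 1

/-- Left action of P on P⊗P: x·(u⊗v) = xu⊗v. -/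
noncomputable def leftAct (k P : Type*) [Field k] [Ring P] [Algebra k P] :
    P ⊗[k] (P ⊗[k] P) →ₗ[k] P ⊗[k] P :=
  (LinearMap.rTensor P (LinearMap.mul' k P)) ∘ₗ
    (TensorProduct.assoc k P P P).symm.toLinearMap

noncomputable def tildeMap {k A P : Type*} [Field k] [Ring A] [HopfAlgebra k A]
    [Ring P] [Algebra k P] (ΔR : P →ₐ[k] P ⊗[k] A) :
    P ⊗[k] P →ₗ[k] P ⊗[k] A :=
  (LinearMap.rTensor A (LinearMap.mul' k P)) ∘ₗ
    (TensorProduct.assoc k P P A).symm.toLinearMap ∘ₗ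
    (LinearMap.lTensor P ΔR.toLinearMap)

noncomputable def diagCoaction {k A P : Type*} [Field k] [Ring A] [HopfAlgebra k A]
    [Ring P] [Algebra k P] (ΔR : P →ₐ[k] P ⊗[k] A) :
    P ⊗[k] P →ₗ[k] (P ⊗[k] P) ⊗[k] A :=
  (LinearMap.lTensor (P ⊗[k] P) (LinearMap.mul' k A)) ∘ₗ
    (TensorProduct.tensorTensorTensorComm k P A P A).toLinearMap ∘ₗ
    (TensorProduct.map ΔR.toLinearMap ΔR.toLinearMap)

set_option synthInstance.maxHeartbeats 1000000 in
set_option maxHeartbeats 2000000 in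
theorem trivial_connection_form
    {k A P : Type*} [Field k] [Ring A] [HopfAlgebra k A]
    [Ring P] [Algebra k P]
    (ΔR : P →ₐ[k] P ⊗[k] A)
    (hcoassoc : (TensorProduct.assoc k P A A).toLinearMap ∘ₗ
        (ΔR.toLinearMap.rTensor A) ∘ₗ ΔR.toLinearMap =
        ((Coalgebra.comul (R := k) (A := A)).lTensor P) ∘ₗ ΔR.toLinearMap)
    (hcounit : (TensorProduct.rid k P).toLinearMap ∘ₗ
        ((Coalgebra.counit (R := k) (A := A)).lTensor P) ∘ₗ ΔR.toLinearMap =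
        LinearMap.id)
    (Φ Φinv : A →ₗ[k] P)
    (hint : ΔR.toLinearMap ∘ₗ Φ = (Φ.rTensor A) ∘ₗ Coalgebra.comul)
    (hΦone : Φ 1 = 1)
    (hΦ₁ : (LinearMap.mul' k P) ∘ₗ (TensorProduct.map Φ Φinv) ∘ₗ Coalgebra.comul =
        (Algebra.linearMap k P) ∘ₗ Coalgebra.counit)
    (hΦ₂ : (LinearMap.mul' k P) ∘ₗ (TensorProduct.map Φinv Φ) ∘ₗ Coalgebra.comul =
        (Algebra.linearMap k P) ∘ₗ Coalgebra.counit) :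
    -- ω_triv(a) = Σ Φ⁻¹(a₍₁₎) · dΦ(a₍₂₎)
    let ωtriv : A →ₗ[k] P ⊗[k] P :=
      (leftAct k P) ∘ₗ (TensorProduct.map Φinv ((dUniv k P) ∘ₗ Φ)) ∘ₗ
        Coalgebra.comul
    (ωtriv 1 = 0) ∧
    (tildeMap ΔR ∘ₗ ωtriv =
      TensorProduct.mk k P A 1 -
        (Algebra.linearMap k (P ⊗[k] A)) ∘ₗ Coalgebra.counit) ∧
    (diagCoaction ΔR ∘ₗ ωtriv = (ωtriv.rTensor A) ∘ₗ AdR k A) := by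
  intro ωtriv
  -- Φinv 1 = 1
  have hΦinv_one : Φinv 1 = (1 : P) := by
    have := LinearMap.congr_fun hΦ₂ 1
    simpa [Algebra.TensorProduct.one_def, hΦone] using this
  -- ωtriv = map Φinv Φ ∘ comul - (·⊗1)∘η∘ε
  have homega : ωtriv = TensorProduct.map Φinv Φ ∘ₗ Coalgebra.comul -
      ((TensorProduct.mk k P P).flip 1) ∘ₗ (Algebra.linearMap k P) ∘ₗ Coalgebra.counit := by
    have step : leftAct k P ∘ₗ TensorProduct.map Φinv ((dUniv k P) ∘ₗ Φ)
        = TensorProduct.map Φinv Φ -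
          ((TensorProduct.mk k P P).flip 1) ∘ₗ LinearMap.mul' k P ∘ₗ TensorProduct.map Φinv Φ := by
      ext x y
      simp only [AlgebraTensorModule.curry_apply, TensorProduct.curry_apply,
        LinearMap.coe_restrictScalars, leftAct, dUniv, LinearMap.coe_comp, Function.comp_apply,
        TensorProduct.map_tmul, LinearMap.sub_apply, TensorProduct.mk_apply,
        LinearMap.flip_apply, TensorProduct.tmul_sub, map_sub, LinearEquiv.coe_coe,
        TensorProduct.assoc_symm_tmul, LinearMap.rTensor_tmul, LinearMap.mul'_apply,
        mul_one]
    show (leftAct k P) ∘ₗ TensorProduct.map Φinv ((dUniv k P) ∘ₗ Φ) ∘ₗ Coalgebra.comul = _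
    rw [← LinearMap.comp_assoc, step, LinearMap.sub_comp]
    simp only [LinearMap.comp_assoc]
    rw [hΦ₂]
  refine ⟨?_, ?_, ?_⟩
  · rw [homega]
    simp [Algebra.TensorProduct.one_def, hΦinv_one, hΦone]
  · -- part 2
    have F : tildeMap ΔR ∘ₗ TensorProduct.map Φinv Φ
        = LinearMap.rTensor A (LinearMap.mul' k P ∘ₗ TensorProduct.map Φinv Φ) ∘ₗ
          (TensorProduct.assoc k A A A).symm.toLinearMap ∘ₗ
          LinearMap.lTensor A (Coalgebra.comul (R := k) (A := A)) := by
      ext x y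
      have hy : ΔR.toLinearMap (Φ y) = Φ.rTensor A (Coalgebra.comul y) :=
        LinearMap.congr_fun hint y
      simp only [AlgebraTensorModule.curry_apply, TensorProduct.curry_apply,
        LinearMap.coe_restrictScalars, LinearMap.coe_comp, Function.comp_apply,
        TensorProduct.map_tmul, tildeMap, LinearMap.lTensor_tmul, hy,
        LinearEquiv.coe_coe]
      induction (Coalgebra.comul (R := k) y) using TensorProduct.induction_on with
      | zero => simp
      | tmul u v => simp
      | add s t hs ht =>
        simp only [map_add, TensorProduct.tmul_add, hs, ht]
    have hΦ₂' : (LinearMap.mul' k P ∘ₗ TensorProduct.map Φinv Φ) ∘ₗ Coalgebra.comul =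
        (Algebra.linearMap k P) ∘ₗ Coalgebra.counit := by
      rw [LinearMap.comp_assoc]; exact hΦ₂
    have E4 : LinearMap.rTensor A (Algebra.linearMap k P) ∘ₗ TensorProduct.mk k k A 1
        = TensorProduct.mk k P A 1 := by
      ext a; simp
    have termA : tildeMap ΔR ∘ₗ TensorProduct.map Φinv Φ ∘ₗ Coalgebra.comul
        = TensorProduct.mk k P A 1 := by
      rw [← LinearMap.comp_assoc, F]
      simp only [LinearMap.comp_assoc]
      rw [Coalgebra.coassoc_symm, ← LinearMap.comp_assoc, ← LinearMap.rTensor_comp, hΦ₂',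
        LinearMap.rTensor_comp, LinearMap.comp_assoc, Coalgebra.rTensor_counit_comp_comul, E4]
    have termB : tildeMap ΔR ∘ₗ ((TensorProduct.mk k P P).flip 1) ∘ₗ (Algebra.linearMap k P)
        = Algebra.linearMap k (P ⊗[k] A) := by
      ext
      simp [tildeMap, Algebra.TensorProduct.one_def]
    rw [homega, LinearMap.comp_sub, termA]
    congr 1
    rw [← termB]
    simp only [LinearMap.comp_assoc]
  · -- part 3
    -- helper unit lemmas
    have mkPAη : (TensorProduct.mk k P A 1) ∘ₗ Algebra.linearMap k A
        = Algebra.linearMap k (P ⊗[k] A) := by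
      ext; simp [Algebra.TensorProduct.one_def]
    have flipη : ((TensorProduct.mk k P A).flip 1) ∘ₗ Algebra.linearMap k P
        = Algebra.linearMap k (P ⊗[k] A) := by
      ext; simp [Algebra.TensorProduct.one_def]
    have mkNη : (TensorProduct.mk k (P ⊗[k] P) A 1) ∘ₗ Algebra.linearMap k A
        = Algebra.linearMap k ((P ⊗[k] P) ⊗[k] A) := by
      ext; simp [Algebra.TensorProduct.one_def]
    have jNη : ((TensorProduct.mk k (P ⊗[k] P) A).flip 1) ∘ₗ ((TensorProduct.mk k P P).flip 1)
          ∘ₗ Algebra.linearMap k P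
        = Algebra.linearMap k ((P ⊗[k] P) ⊗[k] A) := by
      ext; simp [Algebra.TensorProduct.one_def]
    have ΔRη : ΔR.toLinearMap ∘ₗ Algebra.linearMap k P = Algebra.linearMap k (P ⊗[k] A) := by
      ext; simp [Algebra.TensorProduct.one_def]
    -- convolution facts in P ⊗ A
    have Huv : LinearMap.mul' k (P ⊗[k] A) ∘ₗ
        TensorProduct.map (TensorProduct.mk k P A 1 ∘ₗ HopfAlgebra.antipode (R := k))
          (((TensorProduct.mk k P A).flip 1) ∘ₗ Φinv)
        = TensorProduct.map Φinv (HopfAlgebra.antipode (R := k)) ∘ₗ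
          (TensorProduct.comm k A A).toLinearMap := by
      ext x y
      simp [Algebra.TensorProduct.tmul_mul_tmul]
    have huv : myconv (TensorProduct.mk k P A 1 ∘ₗ HopfAlgebra.antipode (R := k))
          (((TensorProduct.mk k P A).flip 1) ∘ₗ Φinv)
        = TensorProduct.map Φinv (HopfAlgebra.antipode (R := k)) ∘ₗ
          (TensorProduct.comm k A A).toLinearMap ∘ₗ Coalgebra.comul := by
      rw [myconv_eq Huv]; simp only [LinearMap.comp_assoc]
    have Hvw : LinearMap.mul' k (P ⊗[k] A) ∘ₗ
        TensorProduct.map (((TensorProduct.mk k P A).flip 1) ∘ₗ Φinv)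
          (((TensorProduct.mk k P A).flip 1) ∘ₗ Φ)
        = ((TensorProduct.mk k P A).flip 1) ∘ₗ LinearMap.mul' k P ∘ₗ
          TensorProduct.map Φinv Φ := by
      ext x y
      simp [Algebra.TensorProduct.tmul_mul_tmul]
    have hvw : myconv (((TensorProduct.mk k P A).flip 1) ∘ₗ Φinv)
          (((TensorProduct.mk k P A).flip 1) ∘ₗ Φ)
        = Algebra.linearMap k (P ⊗[k] A) ∘ₗ Coalgebra.counit := by
      rw [myconv_eq Hvw]
      simp only [LinearMap.comp_assoc]
      rw [hΦ₂, ← flipη]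
      simp only [LinearMap.comp_assoc]
    have Hwz : LinearMap.mul' k (P ⊗[k] A) ∘ₗ
        TensorProduct.map (((TensorProduct.mk k P A).flip 1) ∘ₗ Φ) (TensorProduct.mk k P A 1)
        = Φ.rTensor A := by
      ext x y
      simp [Algebra.TensorProduct.tmul_mul_tmul]
    have hwz : myconv (((TensorProduct.mk k P A).flip 1) ∘ₗ Φ) (TensorProduct.mk k P A 1)
        = ΔR.toLinearMap ∘ₗ Φ := by
      rw [myconv_eq Hwz, ← hint]
    have Huz : LinearMap.mul' k (P ⊗[k] A) ∘ₗ
        TensorProduct.map (TensorProduct.mk k P A 1 ∘ₗ HopfAlgebra.antipode (R := k))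
          (TensorProduct.mk k P A 1)
        = (TensorProduct.mk k P A 1) ∘ₗ LinearMap.mul' k A ∘ₗ
          (HopfAlgebra.antipode (R := k)).rTensor A := by
      ext x y
      simp [Algebra.TensorProduct.tmul_mul_tmul]
    have huz : myconv (TensorProduct.mk k P A 1 ∘ₗ HopfAlgebra.antipode (R := k))
          (TensorProduct.mk k P A 1)
        = Algebra.linearMap k (P ⊗[k] A) ∘ₗ Coalgebra.counit := by
      rw [myconv_eq Huz]
      simp only [LinearMap.comp_assoc]
      rw [HopfAlgebra.mul_antipode_rTensor_comul, ← mkPAη]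
      simp only [LinearMap.comp_assoc]
    have HΔ : ∀ f g : A →ₗ[k] P, LinearMap.mul' k (P ⊗[k] A) ∘ₗ
        TensorProduct.map (ΔR.toLinearMap ∘ₗ f) (ΔR.toLinearMap ∘ₗ g)
        = ΔR.toLinearMap ∘ₗ LinearMap.mul' k P ∘ₗ TensorProduct.map f g := by
      intro f g
      ext x y
      simp [← map_mul]
    have hfg : myconv (ΔR.toLinearMap ∘ₗ Φ) (ΔR.toLinearMap ∘ₗ Φinv)
        = Algebra.linearMap k (P ⊗[k] A) ∘ₗ Coalgebra.counit := by
      rw [myconv_eq (HΔ Φ Φinv)]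
      simp only [LinearMap.comp_assoc]
      rw [hΦ₁, ← ΔRη]
      simp only [LinearMap.comp_assoc]
    have h1 : myconv (TensorProduct.map Φinv (HopfAlgebra.antipode (R := k)) ∘ₗ
          (TensorProduct.comm k A A).toLinearMap ∘ₗ Coalgebra.comul) (ΔR.toLinearMap ∘ₗ Φ)
        = Algebra.linearMap k (P ⊗[k] A) ∘ₗ Coalgebra.counit := by
      rw [← huv, ← hwz, myconv_assoc,
        ← myconv_assoc (((TensorProduct.mk k P A).flip 1) ∘ₗ Φinv)
          (((TensorProduct.mk k P A).flip 1) ∘ₗ Φ) (TensorProduct.mk k P A 1),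
        hvw, myconv_one_left, huz]
    have KEY : ΔR.toLinearMap ∘ₗ Φinv
        = TensorProduct.map Φinv (HopfAlgebra.antipode (R := k)) ∘ₗ
          (TensorProduct.comm k A A).toLinearMap ∘ₗ Coalgebra.comul := by
      have t1 := congrArg (fun g => myconv g (ΔR.toLinearMap ∘ₗ Φinv)) h1
      rw [myconv_assoc, hfg, myconv_one_right, myconv_one_left] at t1
      exact t1.symm
    -- convolution facts in (P ⊗ P) ⊗ A
    have Hrp : LinearMap.mul' k ((P ⊗[k] P) ⊗[k] A) ∘ₗ
        TensorProduct.map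
          (TensorProduct.mk k (P ⊗[k] P) A 1 ∘ₗ HopfAlgebra.antipode (R := k))
          (((TensorProduct.mk k (P ⊗[k] P) A).flip 1) ∘ₗ ((TensorProduct.mk k P P).flip 1) ∘ₗ Φinv)
        = (LinearMap.rTensor A ((TensorProduct.mk k P P).flip 1)) ∘ₗ
          TensorProduct.map Φinv (HopfAlgebra.antipode (R := k)) ∘ₗ
          (TensorProduct.comm k A A).toLinearMap := by
      ext x y
      simp [Algebra.TensorProduct.tmul_mul_tmul, Algebra.TensorProduct.one_def]
    have hrp : myconv
          (TensorProduct.mk k (P ⊗[k] P) A 1 ∘ₗ HopfAlgebra.antipode (R := k))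
          (((TensorProduct.mk k (P ⊗[k] P) A).flip 1) ∘ₗ ((TensorProduct.mk k P P).flip 1) ∘ₗ Φinv)
        = (LinearMap.rTensor A ((TensorProduct.mk k P P).flip 1)) ∘ₗ
          TensorProduct.map Φinv (HopfAlgebra.antipode (R := k)) ∘ₗ
          (TensorProduct.comm k A A).toLinearMap ∘ₗ Coalgebra.comul := by
      rw [myconv_eq Hrp]; simp only [LinearMap.comp_assoc]
    have Hqs : LinearMap.mul' k ((P ⊗[k] P) ⊗[k] A) ∘ₗ
        TensorProduct.map
          (((TensorProduct.mk k (P ⊗[k] P) A).flip 1) ∘ₗ (TensorProduct.mk k P P 1) ∘ₗ Φ)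
          (TensorProduct.mk k (P ⊗[k] P) A 1)
        = (LinearMap.rTensor A (TensorProduct.mk k P P 1)) ∘ₗ Φ.rTensor A := by
      ext x y
      simp [Algebra.TensorProduct.tmul_mul_tmul, Algebra.TensorProduct.one_def]
    have hqs : myconv
          (((TensorProduct.mk k (P ⊗[k] P) A).flip 1) ∘ₗ (TensorProduct.mk k P P 1) ∘ₗ Φ)
          (TensorProduct.mk k (P ⊗[k] P) A 1)
        = (LinearMap.rTensor A (TensorProduct.mk k P P 1)) ∘ₗ ΔR.toLinearMap ∘ₗ Φ := by
      rw [myconv_eq Hqs]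
      simp only [LinearMap.comp_assoc]
      rw [← hint]
    have Hpq : LinearMap.mul' k ((P ⊗[k] P) ⊗[k] A) ∘ₗ
        TensorProduct.map
          (((TensorProduct.mk k (P ⊗[k] P) A).flip 1) ∘ₗ ((TensorProduct.mk k P P).flip 1) ∘ₗ Φinv)
          (((TensorProduct.mk k (P ⊗[k] P) A).flip 1) ∘ₗ (TensorProduct.mk k P P 1) ∘ₗ Φ)
        = ((TensorProduct.mk k (P ⊗[k] P) A).flip 1) ∘ₗ TensorProduct.map Φinv Φ := by
      ext x y
      simp [Algebra.TensorProduct.tmul_mul_tmul, Algebra.TensorProduct.one_def]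
    have hpq : myconv
          (((TensorProduct.mk k (P ⊗[k] P) A).flip 1) ∘ₗ ((TensorProduct.mk k P P).flip 1) ∘ₗ Φinv)
          (((TensorProduct.mk k (P ⊗[k] P) A).flip 1) ∘ₗ (TensorProduct.mk k P P 1) ∘ₗ Φ)
        = (((TensorProduct.mk k (P ⊗[k] P) A).flip 1) ∘ₗ TensorProduct.map Φinv Φ) ∘ₗ
          Coalgebra.comul := myconv_eq Hpq
    have Hrs : LinearMap.mul' k ((P ⊗[k] P) ⊗[k] A) ∘ₗ
        TensorProduct.map
          (TensorProduct.mk k (P ⊗[k] P) A 1 ∘ₗ HopfAlgebra.antipode (R := k))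
          (TensorProduct.mk k (P ⊗[k] P) A 1)
        = (TensorProduct.mk k (P ⊗[k] P) A 1) ∘ₗ LinearMap.mul' k A ∘ₗ
          (HopfAlgebra.antipode (R := k)).rTensor A := by
      ext x y
      simp [Algebra.TensorProduct.tmul_mul_tmul]
    have hrs : myconv
          (TensorProduct.mk k (P ⊗[k] P) A 1 ∘ₗ HopfAlgebra.antipode (R := k))
          (TensorProduct.mk k (P ⊗[k] P) A 1)
        = Algebra.linearMap k ((P ⊗[k] P) ⊗[k] A) ∘ₗ Coalgebra.counit := by
      rw [myconv_eq Hrs]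
      simp only [LinearMap.comp_assoc]
      rw [HopfAlgebra.mul_antipode_rTensor_comul, ← mkNη]
      simp only [LinearMap.comp_assoc]
    -- Ad-covariance reduction
    have claim3 : ∀ f : A →ₗ[k] P ⊗[k] P,
        LinearMap.rTensor A f ∘ₗ AdR k A
        = myconv (TensorProduct.mk k (P ⊗[k] P) A 1 ∘ₗ HopfAlgebra.antipode (R := k))
            (myconv (((TensorProduct.mk k (P ⊗[k] P) A).flip 1) ∘ₗ f)
              (TensorProduct.mk k (P ⊗[k] P) A 1)) := by
      intro f
      have Hcore : LinearMap.rTensor A f ∘ₗ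
          (LinearMap.lTensor A (LinearMap.mul' k A)) ∘ₗ
          (TensorProduct.assoc k A A A).toLinearMap ∘ₗ
          (LinearMap.rTensor A (TensorProduct.comm k A A).toLinearMap) ∘ₗ
          (TensorProduct.assoc k A A A).symm.toLinearMap ∘ₗ
          (LinearMap.rTensor (A ⊗[k] A) (HopfAlgebra.antipode (R := k) (A := A)))
          = LinearMap.mul' k ((P ⊗[k] P) ⊗[k] A) ∘ₗ
            TensorProduct.map
              ((TensorProduct.mk k (P ⊗[k] P) A 1) ∘ₗ HopfAlgebra.antipode (R := k))
              (LinearMap.mul' k ((P ⊗[k] P) ⊗[k] A) ∘ₗ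
                TensorProduct.map (((TensorProduct.mk k (P ⊗[k] P) A).flip 1) ∘ₗ f)
                  (TensorProduct.mk k (P ⊗[k] P) A 1)) := by
        ext x y z
        simp [Algebra.TensorProduct.tmul_mul_tmul]
      have Hinner : TensorProduct.map
            (TensorProduct.mk k (P ⊗[k] P) A 1 ∘ₗ HopfAlgebra.antipode (R := k))
            (LinearMap.mul' k ((P ⊗[k] P) ⊗[k] A) ∘ₗ
              TensorProduct.map (((TensorProduct.mk k (P ⊗[k] P) A).flip 1) ∘ₗ f)
                (TensorProduct.mk k (P ⊗[k] P) A 1) ∘ₗ Coalgebra.comul)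
          = TensorProduct.map
              (TensorProduct.mk k (P ⊗[k] P) A 1 ∘ₗ HopfAlgebra.antipode (R := k))
              (LinearMap.mul' k ((P ⊗[k] P) ⊗[k] A) ∘ₗ
                TensorProduct.map (((TensorProduct.mk k (P ⊗[k] P) A).flip 1) ∘ₗ f)
                  (TensorProduct.mk k (P ⊗[k] P) A 1)) ∘ₗ
              LinearMap.lTensor A (Coalgebra.comul (R := k) (A := A)) := by
        rw [LinearMap.lTensor, ← TensorProduct.map_comp, LinearMap.comp_id, LinearMap.comp_assoc]
      rw [AdR, myconv, myconv, Hinner]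
      simp only [← LinearMap.comp_assoc] at Hcore ⊢
      rw [Hcore]
    -- diagonal coaction of the two pieces of ω
    have hdiag2 : diagCoaction ΔR ∘ₗ ((TensorProduct.mk k P P).flip 1) ∘ₗ Algebra.linearMap k P
        = Algebra.linearMap k ((P ⊗[k] P) ⊗[k] A) := by
      ext
      simp [diagCoaction, Algebra.TensorProduct.one_def]
    have D1 : LinearMap.mul' k ((P ⊗[k] P) ⊗[k] A) ∘ₗ
        TensorProduct.map (LinearMap.rTensor A ((TensorProduct.mk k P P).flip 1))
          (LinearMap.rTensor A (TensorProduct.mk k P P 1))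
        = LinearMap.lTensor (P ⊗[k] P) (LinearMap.mul' k A) ∘ₗ
          (TensorProduct.tensorTensorTensorComm k P A P A).toLinearMap := by
      ext u x v y
      simp [Algebra.TensorProduct.tmul_mul_tmul]
    have e1 : diagCoaction ΔR ∘ₗ TensorProduct.map Φinv Φ
        = LinearMap.mul' k ((P ⊗[k] P) ⊗[k] A) ∘ₗ
          TensorProduct.map
            ((LinearMap.rTensor A ((TensorProduct.mk k P P).flip 1)) ∘ₗ
              TensorProduct.map Φinv (HopfAlgebra.antipode (R := k)) ∘ₗ
              (TensorProduct.comm k A A).toLinearMap ∘ₗ Coalgebra.comul)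
            ((LinearMap.rTensor A (TensorProduct.mk k P P 1)) ∘ₗ ΔR.toLinearMap ∘ₗ Φ) := by
      rw [diagCoaction]
      simp only [LinearMap.comp_assoc]
      rw [← TensorProduct.map_comp, KEY]
      simp only [← LinearMap.comp_assoc]
      rw [← D1]
      simp only [LinearMap.comp_assoc]
      rw [← TensorProduct.map_comp]
    have hdiagA : diagCoaction ΔR ∘ₗ TensorProduct.map Φinv Φ ∘ₗ Coalgebra.comul
        = myconv (TensorProduct.mk k (P ⊗[k] P) A 1 ∘ₗ HopfAlgebra.antipode (R := k))
            (myconv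
              (((TensorProduct.mk k (P ⊗[k] P) A).flip 1) ∘ₗ ((TensorProduct.mk k P P).flip 1) ∘ₗ Φinv)
              (myconv
                (((TensorProduct.mk k (P ⊗[k] P) A).flip 1) ∘ₗ (TensorProduct.mk k P P 1) ∘ₗ Φ)
                (TensorProduct.mk k (P ⊗[k] P) A 1))) := by
      have e2 := congrArg (fun g => g ∘ₗ (Coalgebra.comul (R := k) (A := A))) e1
      simp only [LinearMap.comp_assoc] at e2
      have e3 : myconv
            ((LinearMap.rTensor A ((TensorProduct.mk k P P).flip 1)) ∘ₗ
              TensorProduct.map Φinv (HopfAlgebra.antipode (R := k)) ∘ₗ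
              (TensorProduct.comm k A A).toLinearMap ∘ₗ Coalgebra.comul)
            ((LinearMap.rTensor A (TensorProduct.mk k P P 1)) ∘ₗ ΔR.toLinearMap ∘ₗ Φ)
          = myconv (TensorProduct.mk k (P ⊗[k] P) A 1 ∘ₗ HopfAlgebra.antipode (R := k))
            (myconv
              (((TensorProduct.mk k (P ⊗[k] P) A).flip 1) ∘ₗ ((TensorProduct.mk k P P).flip 1) ∘ₗ Φinv)
              (myconv
                (((TensorProduct.mk k (P ⊗[k] P) A).flip 1) ∘ₗ (TensorProduct.mk k P P 1) ∘ₗ Φ)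
                (TensorProduct.mk k (P ⊗[k] P) A 1))) := by
        rw [← hrp, ← hqs, myconv_assoc]
      rw [← e3]
      exact e2
    -- assemble
    rw [homega, LinearMap.comp_sub, LinearMap.rTensor_sub, LinearMap.sub_comp]
    congr 1
    · rw [hdiagA, claim3,
        ← LinearMap.comp_assoc (Coalgebra.comul (R := k) (A := A)) (TensorProduct.map Φinv Φ)
          ((TensorProduct.mk k (P ⊗[k] P) A).flip 1),
        ← hpq, myconv_assoc]
    · rw [claim3]
      have hj2 : ((TensorProduct.mk k (P ⊗[k] P) A).flip 1) ∘ₗ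
            (((TensorProduct.mk k P P).flip 1) ∘ₗ Algebra.linearMap k P ∘ₗ
              (Coalgebra.counit (R := k) (A := A)))
          = Algebra.linearMap k ((P ⊗[k] P) ⊗[k] A) ∘ₗ (Coalgebra.counit (R := k) (A := A)) := by
        rw [← jNη]
        simp only [LinearMap.comp_assoc]
      rw [hj2, myconv_one_left, hrs, ← hdiag2]
      simp only [LinearMap.comp_assoc]
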